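/- Let Ω_d ⊂ ℝ^d, Ω_p ⊂ ℝ^p be compact, and let π be a Borel probability measure on Ω_d × Ω_p whose first marginal μ = (p₁)_*π is atomless. Then π is the weak-* limit of a sequence of measures of the form (Id, T_m)_*μ, where each T_m : Ω_d → Ω_p is a Borel map with (T_m)_*μ = (p₂)_*π. In other words, transport plans induced by maps are weak-* dense among all plans with atomless first marginal. -/

import Mathlib

open MeasureTheory Filter

open Set ProbabilityTheory
open scoped Topology

lemma map_cdf_atomless (μ : Measure ℝ) [IsProbabilityMeasure μ] (h : ∀ x, μ {x} = 0) :
    Measure.map (cdf μ) μ = volume.restrict (Set.Ioo 0 1) := by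
  have hF : Monotone (cdf μ) := monotone_cdf μ
  have hFm : Measurable (cdf μ) := hF.measurable
  have hleft : ∀ a : ℝ, Function.leftLim (cdf μ) a = cdf μ a := by
    intro a
    have h1 : (cdf μ).measure {a} = 0 := by rw [measure_cdf]; exact h a
    rw [StieltjesFunction.measure_singleton] at h1
    have h2 := hF.leftLim_le (le_refl a)
    have h3 := ENNReal.ofReal_eq_zero.mp h1
    linarith
  haveI : IsProbabilityMeasure (Measure.map (cdf μ) μ) :=
    Measure.isProbabilityMeasure_map hFm.aemeasurable
  haveI : IsProbabilityMeasure (volume.restrict (Set.Ioo (0:ℝ) 1)) :=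
    ⟨by simp [Real.volume_Ioo]⟩
  refine Measure.ext_of_Iic _ _ (fun t => ?_)
  rw [Measure.map_apply hFm measurableSet_Iic]
  rcases le_or_gt 1 t with ht | ht
  · have h1 : (cdf μ) ⁻¹' (Iic t) = univ :=
      eq_univ_of_forall fun x => le_trans (cdf_le_one μ x) ht
    have h2 : Iic t ∩ Ioo (0:ℝ) 1 = Ioo (0:ℝ) 1 :=
      inter_eq_self_of_subset_right fun u hu => le_trans hu.2.le ht
    rw [h1, measure_univ, Measure.restrict_apply measurableSet_Iic, h2]
    simp [Real.volume_Ioo]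
  · have hRHS : volume.restrict (Ioo (0:ℝ) 1) (Iic t) = ENNReal.ofReal t := by
      rw [Measure.restrict_apply measurableSet_Iic]
      have h2 : Iic t ∩ Ioo (0:ℝ) 1 = Ioc 0 t := by
        ext u
        constructor
        · rintro ⟨hu1, hu2, _⟩; exact ⟨hu2, hu1⟩
        · rintro ⟨hu1, hu2⟩; exact ⟨hu2, hu1, lt_of_le_of_lt hu2 ht⟩
      rw [h2, Real.volume_Ioc, sub_zero]
    rw [hRHS]
    by_cases hA : ((cdf μ) ⁻¹' (Iic t)).Nonempty
    · obtain ⟨x₀, hx₀⟩ := ((tendsto_cdf_atTop μ).eventually_const_lt ht).exists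
      have hbdd : BddAbove ((cdf μ) ⁻¹' Iic t) := by
        refine ⟨x₀, fun z hz => ?_⟩
        by_contra hzx
        push_neg at hzx
        exact absurd (le_trans (hF hzx.le) hz) (not_le.2 hx₀)
      set a := sSup ((cdf μ) ⁻¹' Iic t) with ha
      have hIio : Iio a ⊆ (cdf μ) ⁻¹' Iic t := by
        intro x hx
        obtain ⟨z, hz, hxz⟩ := exists_lt_of_lt_csSup hA hx
        exact le_trans (hF hxz.le) hz
      have hIic : (cdf μ) ⁻¹' Iic t ⊆ Iic a := fun z hz => le_csSup hbdd hz
      have hFa_le : cdf μ a ≤ t := by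
        rw [← hleft a]
        refine le_of_tendsto (hF.tendsto_leftLim a) ?_
        exact eventually_nhdsWithin_of_forall (fun x hx => hIio hx)
      have hFa_ge : t ≤ cdf μ a := by
        by_contra hlt
        push_neg at hlt
        have hrc : Filter.Tendsto (cdf μ) (𝓝[>] a) (𝓝 (cdf μ a)) :=
          ((cdf μ).right_continuous a).tendsto.mono_left
            (nhdsWithin_mono a Ioi_subset_Ici_self)
        have hev : ∀ᶠ x in 𝓝[>] a, cdf μ x < t := hrc.eventually_lt_const hlt
        obtain ⟨x, hx1, hx2⟩ := (hev.and eventually_mem_nhdsWithin).exists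
        exact absurd (show x ≤ a from hIic hx1.le) (not_le.2 hx2)
      have hFa : cdf μ a = t := le_antisymm hFa_le hFa_ge
      have h1 : μ (Iic a) ≤ μ (Iio a) := by
        calc μ (Iic a) ≤ μ (Iio a ∪ {a}) :=
              measure_mono (fun x hx => by
                have hx' : x ≤ a := hx
                rcases lt_or_eq_of_le hx' with h' | h'
                · exact Or.inl h'
                · exact Or.inr (by simpa using h'))
        _ ≤ μ (Iio a) + μ {a} := measure_union_le _ _
        _ = μ (Iio a) := by rw [h a, add_zero]
      have h2 : μ ((cdf μ) ⁻¹' Iic t) = μ (Iic a) :=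
        le_antisymm (measure_mono hIic) (le_trans h1 (measure_mono hIio))
      rw [h2, ← ofReal_cdf μ a, hFa]
    · rw [not_nonempty_iff_eq_empty] at hA
      have h0 : ∀ x, t < cdf μ x := by
        intro x
        by_contra hx
        push_neg at hx
        rw [eq_empty_iff_forall_notMem] at hA
        exact hA x hx
      have ht0 : t ≤ 0 :=
        ge_of_tendsto (tendsto_cdf_atBot μ) (Eventually.of_forall fun x => (h0 x).le)
      rw [hA, measure_empty, ENNReal.ofReal_eq_zero.2 ht0]

lemma quantile_exists (ρ : Measure ℝ) [IsProbabilityMeasure ρ] :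
    ∃ G : ℝ → ℝ, Measurable G ∧
      Measure.map G (volume.restrict (Set.Ioo 0 1)) = ρ := by
  classical
  set G : ℝ → ℝ := fun u => if 0 < u ∧ u < 1 then sInf {x | u ≤ cdf ρ x} else 0 with hGdef
  have key : ∀ u : ℝ, 0 < u → u < 1 → ∀ t : ℝ, (G u ≤ t ↔ u ≤ cdf ρ t) := by
    intro u hu0 hu1 t
    have hne : {x | u ≤ cdf ρ x}.Nonempty := by
      obtain ⟨x, hx⟩ := ((tendsto_cdf_atTop ρ).eventually_const_lt hu1).exists
      exact ⟨x, hx.le⟩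
    have hbdd : BddBelow {x | u ≤ cdf ρ x} := by
      obtain ⟨x₀, hx₀⟩ := ((tendsto_cdf_atBot ρ).eventually_lt_const hu0).exists
      refine ⟨x₀, fun z hz => ?_⟩
      by_contra hzx
      push_neg at hzx
      exact absurd (le_trans hz ((monotone_cdf ρ) hzx.le)) (not_le.2 hx₀)
    have hGu : G u = sInf {x | u ≤ cdf ρ x} := if_pos ⟨hu0, hu1⟩
    have hmem : u ≤ cdf ρ (sInf {x | u ≤ cdf ρ x}) := by
      have hrc : Filter.Tendsto (cdf ρ) (𝓝[>] (sInf {x | u ≤ cdf ρ x}))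
          (𝓝 (cdf ρ (sInf {x | u ≤ cdf ρ x}))) :=
        ((cdf ρ).right_continuous _).tendsto.mono_left
          (nhdsWithin_mono _ Ioi_subset_Ici_self)
      refine ge_of_tendsto hrc ?_
      refine eventually_nhdsWithin_of_forall (fun x hx => ?_)
      obtain ⟨z, hz, hzx⟩ := (csInf_lt_iff hbdd hne).mp hx
      exact le_trans hz ((monotone_cdf ρ) hzx.le)
    constructor
    · intro hle
      exact le_trans (hGu ▸ hmem) ((monotone_cdf ρ) hle)
    · intro hle
      rw [hGu]
      exact csInf_le hbdd hle
  have hGmeas : Measurable G := by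
    apply measurable_of_Iic
    intro t
    have hset : G ⁻¹' Iic t =
        (Ioo 0 1 ∩ Iic (cdf ρ t)) ∪ ((Ioo (0:ℝ) 1)ᶜ ∩ (if (0:ℝ) ≤ t then univ else ∅)) := by
      ext u
      by_cases hu : 0 < u ∧ u < 1
      · simp only [mem_preimage, mem_Iic, mem_union, mem_inter_iff, mem_Ioo, mem_compl_iff,
          key u hu.1 hu.2 t]
        constructor
        · intro hle; exact Or.inl ⟨hu, hle⟩
        · rintro (⟨_, hle⟩ | ⟨hc, _⟩)
          · exact hle
          · exact absurd hu hc
      · have hG0 : G u = 0 := if_neg hu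
        simp only [mem_preimage, mem_Iic, hG0, mem_union, mem_inter_iff, mem_Ioo, mem_compl_iff]
        constructor
        · intro h0t
          refine Or.inr ⟨hu, ?_⟩
          rw [if_pos h0t]; exact mem_univ u
        · rintro (⟨hu', _⟩ | ⟨_, hmem⟩)
          · exact absurd hu' hu
          · by_contra h0t
            push_neg at h0t
            rw [if_neg (not_le.2 h0t)] at hmem
            exact hmem
    rw [hset]
    refine (measurableSet_Ioo.inter measurableSet_Iic).union (measurableSet_Ioo.compl.inter ?_)
    split_ifs
    · exact MeasurableSet.univ
    · exact MeasurableSet.empty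
  refine ⟨G, hGmeas, ?_⟩
  haveI : IsProbabilityMeasure (volume.restrict (Set.Ioo (0:ℝ) 1)) := ⟨by simp [Real.volume_Ioo]⟩
  haveI : IsProbabilityMeasure (Measure.map G (volume.restrict (Set.Ioo (0:ℝ) 1))) :=
    Measure.isProbabilityMeasure_map hGmeas.aemeasurable
  refine Measure.ext_of_Iic _ _ (fun t => ?_)
  rw [Measure.map_apply hGmeas measurableSet_Iic,
    Measure.restrict_apply (hGmeas measurableSet_Iic)]
  have hc0 : 0 ≤ cdf ρ t := cdf_nonneg ρ t
  have hc1 : cdf ρ t ≤ 1 := cdf_le_one ρ t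
  have hsub1 : Ioo 0 (cdf ρ t) ⊆ G ⁻¹' Iic t ∩ Ioo 0 1 := by
    intro u hu
    have hu1 : u < 1 := lt_of_lt_of_le hu.2 hc1
    exact ⟨(key u hu.1 hu1 t).mpr hu.2.le, hu.1, hu1⟩
  have hsub2 : G ⁻¹' Iic t ∩ Ioo 0 1 ⊆ Ioc 0 (cdf ρ t) := by
    rintro u ⟨hle, hu0, hu1⟩
    exact ⟨hu0, (key u hu0 hu1 t).mp hle⟩
  have h1 : volume (G ⁻¹' Iic t ∩ Ioo 0 1) = ENNReal.ofReal (cdf ρ t) := by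
    refine le_antisymm ?_ ?_
    · calc volume (G ⁻¹' Iic t ∩ Ioo 0 1) ≤ volume (Ioc 0 (cdf ρ t)) := measure_mono hsub2
      _ = ENNReal.ofReal (cdf ρ t) := by rw [Real.volume_Ioc, sub_zero]
    · calc ENNReal.ofReal (cdf ρ t) = volume (Ioo 0 (cdf ρ t)) := by
            rw [Real.volume_Ioo, sub_zero]
      _ ≤ volume (G ⁻¹' Iic t ∩ Ioo 0 1) := measure_mono hsub1
  rw [h1, ofReal_cdf]

lemma exists_map_of_atomless {X Y : Type*} [MeasurableSpace X] [StandardBorelSpace X]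
    [MeasurableSpace Y] [StandardBorelSpace Y]
    (μ : Measure X) (ρ : Measure Y) [IsProbabilityMeasure μ] [IsProbabilityMeasure ρ]
    (hμ : ∀ x, μ {x} = 0) :
    ∃ g : X → Y, Measurable g ∧ Measure.map g μ = ρ := by
  have hY : Nonempty Y := by
    by_contra hY
    have hu : (univ : Set Y) = ∅ := Set.univ_eq_empty_iff.2 (not_nonempty_iff.mp hY)
    have h1 : ρ univ = 1 := measure_univ
    rw [hu, measure_empty] at h1
    exact zero_ne_one h1
  obtain ⟨eX, heX⟩ := exists_measurableEmbedding_real X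
  obtain ⟨eY, heY⟩ := exists_measurableEmbedding_real Y
  set μ' := Measure.map eX μ with hμ'def
  haveI : IsProbabilityMeasure μ' := Measure.isProbabilityMeasure_map heX.measurable.aemeasurable
  have hμ' : ∀ r, μ' {r} = 0 := by
    intro r
    rw [hμ'def, Measure.map_apply heX.measurable (measurableSet_singleton r)]
    by_cases hr : ∃ x, eX x = r
    · obtain ⟨x, rfl⟩ := hr
      have hpre : eX ⁻¹' {eX x} = {x} := by
        ext z; simp [heX.injective.eq_iff]
      rw [hpre]; exact hμ x
    · have hpre : eX ⁻¹' {r} = ∅ := by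
        ext z
        simp only [mem_preimage, mem_singleton_iff, mem_empty_iff_false, iff_false]
        exact fun hz => hr ⟨z, hz⟩
      rw [hpre]; exact measure_empty
  set ρ' := Measure.map eY ρ with hρ'def
  haveI : IsProbabilityMeasure ρ' := Measure.isProbabilityMeasure_map heY.measurable.aemeasurable
  obtain ⟨G, hG, hGmap⟩ := quantile_exists ρ'
  have hcdf := map_cdf_atomless μ' hμ'
  have hFmeas : Measurable (cdf μ') := (monotone_cdf μ').measurable
  set inv : ℝ → Y := Function.extend eY id (fun _ => Classical.arbitrary Y) with hinvdef
  have hinv : Measurable inv := heY.measurable_extend measurable_id measurable_const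
  refine ⟨fun x => inv (G (cdf μ' (eX x))),
    hinv.comp (hG.comp (hFmeas.comp heX.measurable)), ?_⟩
  have hinvcomp : inv ∘ eY = id := by
    funext y
    simp only [Function.comp_apply, hinvdef, id]
    exact heY.injective.extend_apply _ _ y
  have mc1 : Measurable (fun x => cdf μ' (eX x)) := hFmeas.comp heX.measurable
  have mc2 : Measurable (fun x => G (cdf μ' (eX x))) := hG.comp mc1
  have e1 : Measure.map (fun x => cdf μ' (eX x)) μ = volume.restrict (Set.Ioo 0 1) := by
    have h := Measure.map_map hFmeas heX.measurable (μ := μ)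
    simp only [Function.comp_def] at h
    rw [← h, ← hμ'def, hcdf]
  have e2 : Measure.map (fun x => G (cdf μ' (eX x))) μ = ρ' := by
    have h := Measure.map_map hG mc1 (μ := μ)
    simp only [Function.comp_def] at h
    rw [← h, e1, hGmap]
  have e3 : Measure.map (fun x => inv (G (cdf μ' (eX x)))) μ
      = Measure.map inv (Measure.map (fun x => G (cdf μ' (eX x))) μ) := by
    have h := Measure.map_map hinv mc2 (μ := μ)
    simp only [Function.comp_def] at h
    rw [h]
  rw [e3, e2, hρ'def, Measure.map_map hinv heY.measurable, hinvcomp, Measure.map_id]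

lemma piece_exists {X Y : Type*} [MeasurableSpace X] [StandardBorelSpace X]
    [MeasurableSpace Y] [StandardBorelSpace Y]
    (π : Measure (X × Y)) [IsProbabilityMeasure π]
    (hatomless : ∀ x, Measure.map Prod.fst π {x} = 0)
    (Q : Set X) (hQ : MeasurableSet Q) :
    ∃ g : X → Y, Measurable g ∧
      Measure.map g ((Measure.map Prod.fst π).restrict Q)
        = Measure.map Prod.snd (π.restrict (Q ×ˢ univ)) := by
  classical
  have hYne : Nonempty Y := by
    by_contra hY
    haveI : IsEmpty Y := not_nonempty_iff.mp hY
    have h1 : π univ = 1 := measure_univ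
    rw [Set.univ_eq_empty_iff.2 (by infer_instance), measure_empty] at h1
    exact zero_ne_one h1
  set μ := Measure.map Prod.fst π with hμdef
  have hpre : Prod.fst ⁻¹' Q = Q ×ˢ (univ : Set Y) := by
    ext z; simp
  have hμQ : μ Q = π (Q ×ˢ univ) := by
    rw [hμdef, Measure.map_apply measurable_fst hQ, hpre]
  set c := π (Q ×ˢ (univ : Set Y)) with hcdef
  by_cases hc : c = 0
  · refine ⟨fun _ => Classical.arbitrary Y, measurable_const, ?_⟩
    have h1 : μ.restrict Q = 0 := by
      rw [Measure.restrict_eq_zero, hμQ]; exact hc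
    have h2 : π.restrict (Q ×ˢ univ) = 0 := by
      rw [Measure.restrict_eq_zero]; exact hc
    rw [h1, h2]
    simp
  · have hctop : c ≠ ⊤ := measure_ne_top π _
    set μQ := c⁻¹ • μ.restrict Q with hμQdef
    set ρQ := c⁻¹ • Measure.map Prod.snd (π.restrict (Q ×ˢ univ)) with hρQdef
    haveI : IsProbabilityMeasure μQ := by
      constructor
      rw [hμQdef, Measure.smul_apply, Measure.restrict_apply_univ, hμQ, smul_eq_mul,
        ENNReal.inv_mul_cancel hc hctop]
    haveI : IsProbabilityMeasure ρQ := by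
      constructor
      rw [hρQdef, Measure.smul_apply,
        Measure.map_apply measurable_snd MeasurableSet.univ, Set.preimage_univ,
        Measure.restrict_apply_univ, smul_eq_mul, ENNReal.inv_mul_cancel hc hctop]
    have hatom : ∀ x, μQ {x} = 0 := by
      intro x
      rw [hμQdef, Measure.smul_apply, Measure.restrict_apply (measurableSet_singleton x)]
      have h1 : μ ({x} ∩ Q) = 0 :=
        le_antisymm (le_trans (measure_mono inter_subset_left) (hatomless x).le) (zero_le)
      rw [h1, smul_eq_mul, mul_zero]
    obtain ⟨g, hg, hgmap⟩ := exists_map_of_atomless μQ ρQ hatom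
    refine ⟨g, hg, ?_⟩
    have h1 : μ.restrict Q = c • μQ := by
      rw [hμQdef, smul_smul, ENNReal.mul_inv_cancel hc hctop, one_smul]
    rw [h1, Measure.map_smul, hgmap, hρQdef, smul_smul, ENNReal.mul_inv_cancel hc hctop,
      one_smul]

lemma map_sum_comm {α β ι : Type*} [MeasurableSpace α] [MeasurableSpace β] {h : α → β}
    (hh : Measurable h) (μs : ι → Measure α) :
    Measure.map h (Measure.sum μs) = Measure.sum (fun i => Measure.map h (μs i)) := by
  ext s hs
  rw [Measure.map_apply hh hs, Measure.sum_apply _ (hh hs), Measure.sum_apply _ hs]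
  exact tsum_congr fun i => (Measure.map_apply hh hs).symm

lemma approx_step {d p : ℕ} (Ωd : Set (EuclideanSpace ℝ (Fin d)))
    (hΩdc : IsCompact Ωd)
    (π : Measure (EuclideanSpace ℝ (Fin d) × EuclideanSpace ℝ (Fin p)))
    [IsProbabilityMeasure π]
    (hatomless : ∀ x, Measure.map Prod.fst π {x} = 0)
    (hμd : Measure.map Prod.fst π Ωdᶜ = 0)
    (r : ℝ) (hr : 0 < r) :
    ∃ (T : EuclideanSpace ℝ (Fin d) → EuclideanSpace ℝ (Fin p))
      (s : EuclideanSpace ℝ (Fin d) → EuclideanSpace ℝ (Fin d)),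
      Measurable T ∧ Measurable s ∧
      Measure.map T (Measure.map Prod.fst π) = Measure.map Prod.snd π ∧
      Measure.map (fun x => (s x, T x)) (Measure.map Prod.fst π)
        = Measure.map (fun z => (s z.1, z.2)) π ∧
      (∀ x ∈ Ωd, s x ∈ Ωd ∧ dist x (s x) < r) := by
  classical
  set μ := Measure.map (Prod.fst : EuclideanSpace ℝ (Fin d) × EuclideanSpace ℝ (Fin p) → EuclideanSpace ℝ (Fin d)) π with hμdef
  have hcover : Ωd ⊆ ⋃ x ∈ Ωd, Metric.ball x r := fun x hx =>
    Set.mem_biUnion hx (Metric.mem_ball_self hr)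
  obtain ⟨b', hb'sub, hb'fin, hb'cov⟩ :=
    hΩdc.elim_finite_subcover_image (fun x _ => Metric.isOpen_ball) hcover
  obtain ⟨n, e, he⟩ := hb'fin.fin_embedding
  set a : Fin n → EuclideanSpace ℝ (Fin d) := fun i => e i with hadef
  set B : Fin n → Set (EuclideanSpace ℝ (Fin d)) := fun i => Metric.ball (a i) r with hBdef
  set Q : Fin n → Set (EuclideanSpace ℝ (Fin d)) := fun i => (Ωd ∩ B i) \ ⋃ j, ⋃ (_ : j < i), B j with hQdef
  have haΩ : ∀ i, a i ∈ Ωd := fun i => hb'sub (by rw [← he]; exact ⟨i, rfl⟩)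
  have hQmeas : ∀ i, MeasurableSet (Q i) := fun i =>
    ((hΩdc.isClosed.measurableSet.inter Metric.isOpen_ball.measurableSet).diff
      (MeasurableSet.iUnion fun j => MeasurableSet.iUnion fun _ =>
        Metric.isOpen_ball.measurableSet))
  have hQdisj : Pairwise (Function.onFun Disjoint Q) := by
    intro i j hij
    rcases hij.lt_or_gt with hlt | hlt
    · exact Set.disjoint_left.2 fun x hxi hxj =>
        hxj.2 (Set.mem_iUnion.2 ⟨i, Set.mem_iUnion.2 ⟨hlt, hxi.1.2⟩⟩)
    · exact Set.disjoint_right.2 fun x hxj hxi =>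
        hxi.2 (Set.mem_iUnion.2 ⟨j, Set.mem_iUnion.2 ⟨hlt, hxj.1.2⟩⟩)
  have hQsubB : ∀ i, Q i ⊆ B i := fun i x hx => hx.1.2
  have hQsubΩ : ∀ i, Q i ⊆ Ωd := fun i x hx => hx.1.1
  have hQunion : (⋃ i, Q i) = Ωd := by
    apply subset_antisymm
    · exact Set.iUnion_subset fun i => hQsubΩ i
    · intro x hx
      have hex : {i : Fin n | x ∈ B i}.Nonempty := by
        have h1 := hb'cov hx
        simp only [Set.mem_iUnion] at h1
        obtain ⟨y, hyb, hxy⟩ := h1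
        rw [← he] at hyb
        obtain ⟨i, rfl⟩ := hyb
        exact ⟨i, hxy⟩
      obtain ⟨i, hiS, hmin⟩ := (wellFounded_lt (α := Fin n)).has_min _ hex
      refine Set.mem_iUnion.2 ⟨i, ⟨⟨hx, hiS⟩, ?_⟩⟩
      intro hmem
      obtain ⟨j, hj⟩ := Set.mem_iUnion.1 hmem
      obtain ⟨hji, hxj⟩ := Set.mem_iUnion.1 hj
      exact hmin j hxj hji
  choose g hg hgmap using fun i => piece_exists π hatomless (Q i) (hQmeas i)
  set T : EuclideanSpace ℝ (Fin d) → EuclideanSpace ℝ (Fin p) := fun x => ∑ i, (Q i).indicator (g i) x with hTdef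
  set s : EuclideanSpace ℝ (Fin d) → EuclideanSpace ℝ (Fin d) := fun x => ∑ i, (Q i).indicator (fun _ => a i) x with hsdef
  have hT : Measurable T :=
    Finset.measurable_sum _ (fun i _ => (hg i).indicator (hQmeas i))
  have hs : Measurable s :=
    Finset.measurable_sum _ (fun i _ => measurable_const.indicator (hQmeas i))
  have hnotmem : ∀ i j, j ≠ i → ∀ x ∈ Q i, x ∉ Q j := by
    intro i j hij x hx hxj
    exact Set.disjoint_left.1 (hQdisj hij) hxj hx
  have hTQ : ∀ i, ∀ x ∈ Q i, T x = g i x := by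
    intro i x hx
    rw [hTdef]
    simp only []
    rw [Finset.sum_eq_single i
      (fun j _ hj => Set.indicator_of_notMem (hnotmem i j hj x hx) _)
      (fun hi => absurd (Finset.mem_univ i) hi)]
    exact Set.indicator_of_mem hx _
  have hsQ : ∀ i, ∀ x ∈ Q i, s x = a i := by
    intro i x hx
    rw [hsdef]
    simp only []
    rw [Finset.sum_eq_single i
      (fun j _ hj => Set.indicator_of_notMem (hnotmem i j hj x hx) _)
      (fun hi => absurd (Finset.mem_univ i) hi)]
    exact Set.indicator_of_mem hx _
  have haeΩ : ∀ᵐ x ∂μ, x ∈ Ωd := by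
    rw [ae_iff]
    exact hμd
  have hμres : μ.restrict Ωd = μ := Measure.restrict_eq_self_of_ae_mem haeΩ
  have hμsum : μ = Measure.sum (fun i => μ.restrict (Q i)) := by
    conv_lhs => rw [← hμres, ← hQunion]
    exact Measure.restrict_iUnion hQdisj hQmeas
  have hπsupp : π ((Ωd ×ˢ (univ : Set (EuclideanSpace ℝ (Fin p))))ᶜ) = 0 := by
    have h1 : (Ωd ×ˢ (univ : Set (EuclideanSpace ℝ (Fin p))))ᶜ = Prod.fst ⁻¹' Ωdᶜ := by
      ext z; simp
    rw [h1, ← Measure.map_apply measurable_fst hΩdc.isClosed.measurableSet.compl]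
    exact hμd
  have haeπ : ∀ᵐ z ∂π, z ∈ Ωd ×ˢ (univ : Set (EuclideanSpace ℝ (Fin p))) := by
    rw [ae_iff]
    have hset : {z : EuclideanSpace ℝ (Fin d) × EuclideanSpace ℝ (Fin p) |
        ¬ z ∈ Ωd ×ˢ (univ : Set (EuclideanSpace ℝ (Fin p)))}
        = (Ωd ×ˢ (univ : Set (EuclideanSpace ℝ (Fin p))))ᶜ := rfl
    rw [hset]
    exact hπsupp
  have hπres : π.restrict (Ωd ×ˢ (univ : Set (EuclideanSpace ℝ (Fin p)))) = π :=
    Measure.restrict_eq_self_of_ae_mem haeπ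
  have hπsum : π = Measure.sum (fun i => π.restrict (Q i ×ˢ (univ : Set (EuclideanSpace ℝ (Fin p))))) := by
    conv_lhs => rw [← hπres, ← hQunion]
    rw [Set.iUnion_prod_const]
    refine Measure.restrict_iUnion ?_ (fun i => (hQmeas i).prod MeasurableSet.univ)
    intro i j hij
    refine Set.disjoint_left.2 fun z hzi hzj => ?_
    exact Set.disjoint_left.1 (hQdisj hij) hzi.1 hzj.1
  have hmarg : Measure.map T μ = Measure.map Prod.snd π := by
    conv_lhs => rw [hμsum]
    rw [map_sum_comm hT]
    conv_rhs => rw [hπsum, map_sum_comm measurable_snd]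
    congr 1
    funext i
    have hcongr : Measure.map T (μ.restrict (Q i)) = Measure.map (g i) (μ.restrict (Q i)) := by
      apply Measure.map_congr
      filter_upwards [ae_restrict_mem (hQmeas i)] with x hx
      exact hTQ i x hx
    rw [hcongr, hgmap i]
  have hmid : Measure.map (fun x => (s x, T x)) μ
      = Measure.map (fun z : EuclideanSpace ℝ (Fin d) × EuclideanSpace ℝ (Fin p) => (s z.1, z.2)) π := by
    have hsm : Measurable fun x => (s x, T x) := hs.prodMk hT
    have hzm : Measurable fun z : EuclideanSpace ℝ (Fin d) × EuclideanSpace ℝ (Fin p) => (s z.1, z.2) :=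
      (hs.comp measurable_fst).prodMk measurable_snd
    conv_lhs => rw [hμsum]
    rw [map_sum_comm hsm]
    conv_rhs => rw [hπsum, map_sum_comm hzm]
    congr 1
    funext i
    calc Measure.map (fun x => (s x, T x)) (μ.restrict (Q i))
        = Measure.map (fun x => (a i, g i x)) (μ.restrict (Q i)) := by
          apply Measure.map_congr
          filter_upwards [ae_restrict_mem (hQmeas i)] with x hx
          show (s x, T x) = (a i, g i x)
          rw [hsQ i x hx, hTQ i x hx]
      _ = Measure.map (fun y => ((a i), y)) (Measure.map (g i) (μ.restrict (Q i))) := by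
          have h := Measure.map_map
            (measurable_const.prodMk measurable_id :
              Measurable fun y : EuclideanSpace ℝ (Fin p) => ((a i), y)) (hg i)
            (μ := μ.restrict (Q i))
          simp only [Function.comp_def] at h
          rw [h]
      _ = Measure.map (fun y => ((a i), y))
            (Measure.map Prod.snd (π.restrict (Q i ×ˢ (univ : Set (EuclideanSpace ℝ (Fin p)))))) := by
          rw [hgmap i]
      _ = Measure.map (fun z : EuclideanSpace ℝ (Fin d) × EuclideanSpace ℝ (Fin p) => (a i, z.2))
            (π.restrict (Q i ×ˢ (univ : Set (EuclideanSpace ℝ (Fin p))))) := by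
          have h := Measure.map_map
            (measurable_const.prodMk measurable_id :
              Measurable fun y : EuclideanSpace ℝ (Fin p) => ((a i), y)) (measurable_snd)
            (μ := π.restrict (Q i ×ˢ (univ : Set (EuclideanSpace ℝ (Fin p)))))
          simp only [Function.comp_def] at h
          rw [h]
      _ = Measure.map (fun z : EuclideanSpace ℝ (Fin d) × EuclideanSpace ℝ (Fin p) => (s z.1, z.2))
            (π.restrict (Q i ×ˢ (univ : Set (EuclideanSpace ℝ (Fin p))))) := by
          apply Measure.map_congr
          filter_upwards [ae_restrict_mem ((hQmeas i).prod MeasurableSet.univ)] with z hz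
          show (a i, z.2) = (s z.1, z.2)
          rw [hsQ i z.1 hz.1]
  refine ⟨T, s, hT, hs, hmarg, hmid, ?_⟩
  intro x hx
  have hx' : x ∈ ⋃ i, Q i := hQunion ▸ hx
  obtain ⟨i, hi⟩ := Set.mem_iUnion.1 hx'
  rw [hsQ i x hi]
  exact ⟨haΩ i, hQsubB i hi⟩

theorem stmt_10 (d p : ℕ)
    (Ωd : Set (EuclideanSpace ℝ (Fin d))) (Ωp : Set (EuclideanSpace ℝ (Fin p)))
    (hΩd : IsCompact Ωd) (hΩp : IsCompact Ωp)
    (π : Measure (EuclideanSpace ℝ (Fin d) × EuclideanSpace ℝ (Fin p)))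
    [IsProbabilityMeasure π]
    (hsupp : π (Ωd ×ˢ Ωp) = 1)
    (hatomless : ∀ x, Measure.map Prod.fst π {x} = 0) :
    ∃ T : ℕ → EuclideanSpace ℝ (Fin d) → EuclideanSpace ℝ (Fin p),
      (∀ m, Measurable (T m)) ∧
      (∀ m, Measure.map (T m) (Measure.map Prod.fst π) = Measure.map Prod.snd π) ∧
      (∀ f : BoundedContinuousFunction
          (EuclideanSpace ℝ (Fin d) × EuclideanSpace ℝ (Fin p)) ℝ,
        Tendsto (fun m =>
            ∫ z, f z ∂(Measure.map (fun x => (x, T m x)) (Measure.map Prod.fst π)))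
          atTop (nhds (∫ z, f z ∂π))) := by
  classical
  haveI hμprob : IsProbabilityMeasure (Measure.map (Prod.fst :
      EuclideanSpace ℝ (Fin d) × EuclideanSpace ℝ (Fin p) → EuclideanSpace ℝ (Fin d)) π) :=
    Measure.isProbabilityMeasure_map measurable_fst.aemeasurable
  haveI hνprob : IsProbabilityMeasure (Measure.map (Prod.snd :
      EuclideanSpace ℝ (Fin d) × EuclideanSpace ℝ (Fin p) → EuclideanSpace ℝ (Fin p)) π) :=
    Measure.isProbabilityMeasure_map measurable_snd.aemeasurable
  have hΩdm : MeasurableSet Ωd := hΩd.isClosed.measurableSet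
  have hΩpm : MeasurableSet Ωp := hΩp.isClosed.measurableSet
  have hμΩd : Measure.map Prod.fst π Ωd = 1 := by
    refine le_antisymm prob_le_one ?_
    rw [Measure.map_apply measurable_fst hΩdm]
    calc (1:ENNReal) = π (Ωd ×ˢ Ωp) := hsupp.symm
    _ ≤ π (Prod.fst ⁻¹' Ωd) := measure_mono (fun z hz => hz.1)
  have hμdc : Measure.map Prod.fst π Ωdᶜ = 0 := by
    rw [measure_compl hΩdm (measure_ne_top _ _), hμΩd, measure_univ, tsub_self]
  have hνΩp : Measure.map Prod.snd π Ωp = 1 := by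
    refine le_antisymm prob_le_one ?_
    rw [Measure.map_apply measurable_snd hΩpm]
    calc (1:ENNReal) = π (Ωd ×ˢ Ωp) := hsupp.symm
    _ ≤ π (Prod.snd ⁻¹' Ωp) := measure_mono (fun z hz => hz.2)
  have hνpc : Measure.map Prod.snd π Ωpᶜ = 0 := by
    rw [measure_compl hΩpm (measure_ne_top _ _), hνΩp, measure_univ, tsub_self]
  have hsuppc : π ((Ωd ×ˢ Ωp)ᶜ) = 0 := by
    rw [measure_compl (hΩdm.prod hΩpm) (measure_ne_top _ _), hsupp, measure_univ, tsub_self]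
  have hstep := fun m : ℕ => approx_step Ωd hΩd π hatomless hμdc (1/((m:ℝ)+1))
    (by positivity)
  choose T s hT hs hmarg hmid hpt using hstep
  refine ⟨T, hT, hmarg, ?_⟩
  intro f
  rw [Metric.tendsto_atTop]
  intro ε hε
  have hK := (hΩd.prod hΩp).uniformContinuousOn_of_continuous f.continuous.continuousOn
  rw [Metric.uniformContinuousOn_iff] at hK
  obtain ⟨δ, hδ, hδ'⟩ := hK (ε/3) (by positivity)
  obtain ⟨N, hN⟩ := exists_nat_gt (1/δ)
  refine ⟨N, fun m hm => ?_⟩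
  have hrm : 1/((m:ℝ)+1) < δ := by
    have h0 : (N:ℝ) ≤ m := Nat.cast_le.2 hm
    have h1 : (1:ℝ)/δ < (m:ℝ)+1 := by linarith
    rw [div_lt_iff₀ hδ] at h1
    rw [div_lt_iff₀ (by positivity : (0:ℝ) < (m:ℝ)+1)]
    linarith
  have haeΩ : ∀ᵐ x ∂(Measure.map Prod.fst π), x ∈ Ωd := by
    rw [ae_iff]; exact hμdc
  have haeT : ∀ᵐ x ∂(Measure.map Prod.fst π), T m x ∈ Ωp := by
    rw [ae_iff]
    have h1 : {x | ¬ T m x ∈ Ωp} = T m ⁻¹' Ωpᶜ := rfl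
    rw [h1, ← Measure.map_apply (hT m) hΩpm.compl, hmarg m]
    exact hνpc
  have haeπ : ∀ᵐ z ∂π, z ∈ Ωd ×ˢ Ωp := by
    rw [ae_iff]
    have h1 : {z : EuclideanSpace ℝ (Fin d) × EuclideanSpace ℝ (Fin p) |
        ¬ z ∈ Ωd ×ˢ Ωp} = (Ωd ×ˢ Ωp)ᶜ := rfl
    rw [h1]; exact hsuppc
  have hg1 : Measurable fun x => (x, T m x) := measurable_id.prodMk (hT m)
  have hg2 : Measurable fun x => (s m x, T m x) := (hs m).prodMk (hT m)
  have hg3 : Measurable fun z : EuclideanSpace ℝ (Fin d) × EuclideanSpace ℝ (Fin p) =>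
      (s m z.1, z.2) := ((hs m).comp measurable_fst).prodMk measurable_snd
  rw [integral_map hg1.aemeasurable f.continuous.aestronglyMeasurable]
  have hB : ∫ z, f z ∂(Measure.map (fun x => (s m x, T m x)) (Measure.map Prod.fst π))
      = ∫ x, f (s m x, T m x) ∂(Measure.map Prod.fst π) :=
    integral_map hg2.aemeasurable f.continuous.aestronglyMeasurable
  have hB' : ∫ z, f z ∂(Measure.map (fun z : EuclideanSpace ℝ (Fin d) ×
        EuclideanSpace ℝ (Fin p) => (s m z.1, z.2)) π)
      = ∫ z, f (s m z.1, z.2) ∂π :=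
    integral_map hg3.aemeasurable f.continuous.aestronglyMeasurable
  have hmid' : ∫ x, f (s m x, T m x) ∂(Measure.map Prod.fst π)
      = ∫ z, f (s m z.1, z.2) ∂π := by
    rw [← hB, ← hB', hmid m]
  have hi1 : Integrable (fun x => f (x, T m x)) (Measure.map Prod.fst π) :=
    Integrable.mono' (integrable_const ‖f‖)
      (f.continuous.measurable.comp hg1).aestronglyMeasurable
      (Eventually.of_forall fun x => f.norm_coe_le_norm _)
  have hi2 : Integrable (fun x => f (s m x, T m x)) (Measure.map Prod.fst π) :=
    Integrable.mono' (integrable_const ‖f‖)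
      (f.continuous.measurable.comp hg2).aestronglyMeasurable
      (Eventually.of_forall fun x => f.norm_coe_le_norm _)
  have hi3 : Integrable (fun z : EuclideanSpace ℝ (Fin d) × EuclideanSpace ℝ (Fin p) =>
      f (s m z.1, z.2)) π :=
    Integrable.mono' (integrable_const ‖f‖)
      (f.continuous.measurable.comp hg3).aestronglyMeasurable
      (Eventually.of_forall fun x => f.norm_coe_le_norm _)
  have hi4 : Integrable (fun z : EuclideanSpace ℝ (Fin d) × EuclideanSpace ℝ (Fin p) =>
      f z) π :=
    Integrable.mono' (integrable_const ‖f‖)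
      f.continuous.measurable.aestronglyMeasurable
      (Eventually.of_forall fun x => f.norm_coe_le_norm _)
  have hb1 : ∀ᵐ x ∂(Measure.map Prod.fst π),
      ‖f (x, T m x) - f (s m x, T m x)‖ ≤ ε/3 := by
    filter_upwards [haeΩ, haeT] with x hxd hxp
    obtain ⟨hsd, hdist⟩ := hpt m x hxd
    have hmem1 : (x, T m x) ∈ Ωd ×ˢ Ωp := ⟨hxd, hxp⟩
    have hmem2 : (s m x, T m x) ∈ Ωd ×ˢ Ωp := ⟨hsd, hxp⟩
    have hd : dist (x, T m x) (s m x, T m x) < δ := by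
      rw [Prod.dist_eq]
      simp only [dist_self]
      rw [max_eq_left dist_nonneg]
      exact lt_trans hdist hrm
    have h2 := hδ' _ hmem1 _ hmem2 hd
    rw [Real.dist_eq] at h2
    rw [Real.norm_eq_abs]
    exact h2.le
  have hb2 : ∀ᵐ z ∂π, ‖f (s m z.1, z.2) - f z‖ ≤ ε/3 := by
    filter_upwards [haeπ] with z hz
    obtain ⟨hsd, hdist⟩ := hpt m z.1 hz.1
    have hmem1 : (s m z.1, z.2) ∈ Ωd ×ˢ Ωp := ⟨hsd, hz.2⟩
    have hd : dist ((s m z.1, z.2) : EuclideanSpace ℝ (Fin d) ×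
        EuclideanSpace ℝ (Fin p)) z < δ := by
      rw [Prod.dist_eq]
      simp only [dist_self]
      rw [max_eq_left dist_nonneg]
      rw [dist_comm]
      exact lt_trans hdist hrm
    have h2 := hδ' _ hmem1 _ hz hd
    rw [Real.dist_eq] at h2
    rw [Real.norm_eq_abs]
    exact h2.le
  have e1 : dist (∫ x, f (x, T m x) ∂(Measure.map Prod.fst π))
      (∫ x, f (s m x, T m x) ∂(Measure.map Prod.fst π)) ≤ ε/3 := by
    rw [dist_eq_norm, ← integral_sub hi1 hi2]
    have h3 := norm_integral_le_of_norm_le_const hb1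
    simpa [measure_univ] using h3
  have e2 : dist (∫ z, f (s m z.1, z.2) ∂π) (∫ z, f z ∂π) ≤ ε/3 := by
    rw [dist_eq_norm, ← integral_sub hi3 hi4]
    have h3 := norm_integral_le_of_norm_le_const hb2
    simpa [measure_univ] using h3
  calc dist (∫ x, f (x, T m x) ∂(Measure.map Prod.fst π)) (∫ z, f z ∂π)
      ≤ dist (∫ x, f (x, T m x) ∂(Measure.map Prod.fst π))
          (∫ x, f (s m x, T m x) ∂(Measure.map Prod.fst π))
        + dist (∫ x, f (s m x, T m x) ∂(Measure.map Prod.fst π)) (∫ z, f z ∂π) :=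
        dist_triangle _ _ _
    _ ≤ ε/3 + ε/3 := by
        refine add_le_add e1 ?_
        rw [hmid']
        exact e2
    _ < ε := by linarith
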